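/- Let {x_i}_{i=1}^m be a unit-norm frame for ℝⁿ and let 0 < ε < 1/64. Suppose ‖x_i − x_j‖ < ε for all i ≠ j. Then for every k with 2 ≤ k ≤ n−2, the frame {x_i}_{i=1}^m is not piecewise scalable with any orthogonal projection of rank k: for every orthogonal projection P on ℝⁿ of rank k and all real constants a_1,...,a_m, b_1,...,b_m, the family {a_i P x_i + b_i (I−P) x_i}_{i=1}^m is not a Parseval frame for ℝⁿ. -/

import Mathlib

open scoped RealInnerProductSpace
open Finset

noncomputable section

/-- A finite family of vectors in `ℝⁿ` is a Parseval frame if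
`∑ i, ⟪x, v i⟫² = ‖x‖²` for all `x`. -/
def IsParseval {n : ℕ} {ι : Type} [Fintype ι] (v : ι → EuclideanSpace ℝ (Fin n)) : Prop :=
  ∀ x : EuclideanSpace ℝ (Fin n), ∑ i, ⟪x, v i⟫ ^ 2 = ‖x‖ ^ 2

/-- `P` is an orthogonal projection: idempotent and self-adjoint. -/
def IsOrthProj {n : ℕ} (P : EuclideanSpace ℝ (Fin n) →ₗ[ℝ] EuclideanSpace ℝ (Fin n)) : Prop :=
  P ∘ₗ P = P ∧ ∀ x y : EuclideanSpace ℝ (Fin n), ⟪P x, y⟫ = ⟪x, P y⟫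

/-- Key auxiliary estimate: if a weighted family `v i` within distance `ε` of a point `p`
of a subspace `W` of dimension `≥ 2` satisfies a Parseval-type identity on `W`, then
`‖p‖ ≤ 2ε`. -/
lemma aux_small {n m : ℕ} (ε : ℝ) (hε0 : 0 < ε)
    (W : Submodule ℝ (EuclideanSpace ℝ (Fin n))) (hW : 2 ≤ Module.finrank ℝ W)
    (p : EuclideanSpace ℝ (Fin n)) (hpW : p ∈ W)
    (v : Fin m → EuclideanSpace ℝ (Fin n))
    (hclose : ∀ i, ‖v i - p‖ ≤ ε)
    (c : Fin m → ℝ)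
    (hpar : ∀ x ∈ W, ∑ i, (c i) ^ 2 * ⟪x, v i⟫ ^ 2 = ‖x‖ ^ 2) :
    ‖p‖ ≤ 2 * ε := by
  by_contra hcon
  push_neg at hcon
  have hp0 : 0 < ‖p‖ := lt_trans (by positivity) hcon
  -- lower bound on the inner products ⟪p, v i⟫
  have hlow : ∀ i, ‖p‖ ^ 2 / 2 ≤ ⟪p, v i⟫ := by
    intro i
    have h1 : ⟪p, v i⟫ = ‖p‖ ^ 2 + ⟪p, v i - p⟫ := by
      rw [inner_sub_right, real_inner_self_eq_norm_sq]; ring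
    have h2 : |⟪p, v i - p⟫| ≤ ‖p‖ * ε := by
      calc |⟪p, v i - p⟫| ≤ ‖p‖ * ‖v i - p‖ := abs_real_inner_le_norm _ _
        _ ≤ ‖p‖ * ε := by
          exact mul_le_mul_of_nonneg_left (hclose i) (norm_nonneg _)
    have h3 := abs_le.mp h2
    nlinarith [h3.1, hcon, hp0]
  -- hence a bound on ∑ c i ^ 2
  have hpp := hpar p hpW
  have hSb : (∑ i, (c i) ^ 2) * (‖p‖ ^ 2 / 2) ^ 2 ≤ ‖p‖ ^ 2 := by
    calc (∑ i, (c i) ^ 2) * (‖p‖ ^ 2 / 2) ^ 2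
        = ∑ i, (c i) ^ 2 * (‖p‖ ^ 2 / 2) ^ 2 := by rw [Finset.sum_mul]
      _ ≤ ∑ i, (c i) ^ 2 * ⟪p, v i⟫ ^ 2 := by
          apply Finset.sum_le_sum
          intro i _
          have h1 := hlow i
          have h2 : (‖p‖ ^ 2 / 2) ^ 2 ≤ ⟪p, v i⟫ ^ 2 := by nlinarith [hp0]
          exact mul_le_mul_of_nonneg_left h2 (sq_nonneg _)
      _ = ‖p‖ ^ 2 := hpp
  have hS4 : (∑ i, (c i) ^ 2) * ‖p‖ ^ 2 ≤ 4 := by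
    nlinarith [mul_pos hp0 hp0, Finset.sum_nonneg (fun i (_ : i ∈ Finset.univ) => sq_nonneg (c i))]
  -- find a unit vector w ∈ W orthogonal to p
  obtain ⟨w, hwW, hwp, hw1⟩ : ∃ w, w ∈ W ∧ ⟪w, p⟫ = 0 ∧ ‖w‖ = 1 := by
    set f : W →ₗ[ℝ] ℝ := (innerSL ℝ p).toLinearMap.comp W.subtype with hf
    have hker : 0 < Module.finrank ℝ (LinearMap.ker f) := by
      have h1 := LinearMap.finrank_range_add_finrank_ker f
      have h2 : Module.finrank ℝ (LinearMap.range f) ≤ 1 := by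
        have := Submodule.finrank_le (LinearMap.range f)
        simpa using this
      omega
    have : Nontrivial (LinearMap.ker f) := Module.finrank_pos_iff.mp hker
    obtain ⟨z, hz⟩ := exists_ne (0 : LinearMap.ker f)
    have hz0 : ((z : W) : EuclideanSpace ℝ (Fin n)) ≠ 0 := by
      intro h
      exact hz (Subtype.ext (Subtype.ext (by simpa using h)))
    have hzp : ⟪p, ((z : W) : EuclideanSpace ℝ (Fin n))⟫ = 0 := z.2
    refine ⟨‖((z : W) : EuclideanSpace ℝ (Fin n))‖⁻¹ • ((z : W) : EuclideanSpace ℝ (Fin n)),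
      W.smul_mem _ (z : W).2, ?_, norm_smul_inv_norm hz0⟩
    rw [real_inner_smul_left, real_inner_comm, hzp, mul_zero]
  -- Parseval at w gives a contradiction
  have hww := hpar w hwW
  rw [hw1] at hww
  have hub : (1 : ℝ) ≤ (∑ i, (c i) ^ 2) * ε ^ 2 := by
    have h1 : ∑ i, (c i) ^ 2 * ⟪w, v i⟫ ^ 2 ≤ ∑ i, (c i) ^ 2 * ε ^ 2 := by
      apply Finset.sum_le_sum
      intro i _
      have h2 : |⟪w, v i⟫| ≤ ε := by
        have h3 : ⟪w, v i⟫ = ⟪w, v i - p⟫ := by rw [inner_sub_right, hwp]; ring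
        rw [h3]
        calc |⟪w, v i - p⟫| ≤ ‖w‖ * ‖v i - p‖ := abs_real_inner_le_norm _ _
          _ ≤ ε := by rw [hw1, one_mul]; exact hclose i
      have h4 : ⟪w, v i⟫ ^ 2 ≤ ε ^ 2 := by nlinarith [abs_nonneg ⟪w, v i⟫, sq_abs ⟪w, v i⟫]
      exact mul_le_mul_of_nonneg_left h4 (sq_nonneg _)
    rw [← Finset.sum_mul] at h1
    calc (1 : ℝ) = 1 ^ 2 := by ring
      _ = ∑ i, (c i) ^ 2 * ⟪w, v i⟫ ^ 2 := hww.symm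
      _ ≤ _ := h1
  -- combine: ‖p‖² ≤ 4ε², contradicting 2ε < ‖p‖
  nlinarith [mul_le_mul_of_nonneg_right hS4 (sq_nonneg ε),
    mul_le_mul_of_nonneg_right hub (sq_nonneg ‖p‖), mul_pos hp0 hp0, hε0]

theorem stmt15 {m n : ℕ} (ε : ℝ) (hε0 : 0 < ε) (hε1 : ε < 1 / 64)
    (x : Fin m → EuclideanSpace ℝ (Fin n))
    (hframe : Submodule.span ℝ (Set.range x) = ⊤)
    (hnorm : ∀ i, ‖x i‖ = 1)
    (hclose : ∀ i j, i ≠ j → ‖x i - x j‖ < ε)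
    (k : ℕ) (hk2 : 2 ≤ k) (hkn : k ≤ n - 2)
    (P : EuclideanSpace ℝ (Fin n) →ₗ[ℝ] EuclideanSpace ℝ (Fin n))
    (hP : IsOrthProj P) (hrank : Module.finrank ℝ (LinearMap.range P) = k)
    (a b : Fin m → ℝ) :
    ¬ IsParseval (fun i => a i • P (x i) + b i • (x i - P (x i))) := by
  intro hPar
  have hn4 : 4 ≤ n := by omega
  obtain ⟨hPP, hsa⟩ := hP
  have hPP' : ∀ v, P (P v) = P v := fun v => by simpa using LinearMap.congr_fun hPP v
  -- m > 0
  have hm : 0 < m := by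
    by_contra hm0
    push_neg at hm0
    have hm0' : m = 0 := by omega
    subst hm0'
    have h1 := hPar (EuclideanSpace.single (⟨0, by omega⟩ : Fin n) (1 : ℝ))
    simp [EuclideanSpace.norm_single] at h1
  set i0 : Fin m := ⟨0, hm⟩ with hi0
  set u : EuclideanSpace ℝ (Fin n) := x i0 with hu
  have hcl : ∀ i, ‖x i - u‖ ≤ ε := by
    intro i
    by_cases h : i = i0
    · subst h; simp [hu, le_of_lt hε0]
    · exact le_of_lt (hclose i i0 h)
  -- contraction facts
  have hPle : ∀ v, ‖P v‖ ≤ ‖v‖ := by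
    intro v
    have h1 : ‖P v‖ ^ 2 = ⟪v, P v⟫ := by
      rw [← real_inner_self_eq_norm_sq]
      calc ⟪P v, P v⟫ = ⟪v, P (P v)⟫ := hsa v (P v)
        _ = ⟪v, P v⟫ := by rw [hPP']
    have h2 : ⟪v, P v⟫ ≤ ‖v‖ * ‖P v‖ := real_inner_le_norm _ _
    nlinarith [norm_nonneg (P v), norm_nonneg v]
  have hQle : ∀ v, ‖v - P v‖ ≤ ‖v‖ := by
    intro v
    have h1 : ⟪v, P v⟫ = ‖P v‖ ^ 2 := by
      rw [← real_inner_self_eq_norm_sq]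
      calc ⟪v, P v⟫ = ⟪v, P (P v)⟫ := by rw [hPP']
        _ = ⟪P v, P v⟫ := (hsa v (P v)).symm
    have h2 : ‖v - P v‖ ^ 2 = ‖v‖ ^ 2 - 2 * ⟪v, P v⟫ + ‖P v‖ ^ 2 := norm_sub_sq_real v (P v)
    nlinarith [norm_nonneg (v - P v), norm_nonneg v, sq_nonneg (‖P v‖)]
  -- Parseval restricted to range P
  have hparP : ∀ y ∈ LinearMap.range P, ∑ i, (a i) ^ 2 * ⟪y, P (x i)⟫ ^ 2 = ‖y‖ ^ 2 := by
    intro y hy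
    obtain ⟨z, hz⟩ := hy
    have hPy : P y = y := by rw [← hz, hPP']
    have h0 : ∀ w, ⟪y, w - P w⟫ = 0 := by
      intro w
      rw [inner_sub_right, ← hsa, hPy, sub_self]
    have h1 := hPar y
    rw [← h1]
    apply Finset.sum_congr rfl
    intro i _
    simp only [inner_add_right, real_inner_smul_right, h0]
    ring
  -- Parseval restricted to ker P
  have hparQ : ∀ y ∈ LinearMap.ker P, ∑ i, (b i) ^ 2 * ⟪y, x i - P (x i)⟫ ^ 2 = ‖y‖ ^ 2 := by
    intro y hy
    have hPy : P y = 0 := hy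
    have h0 : ∀ w, ⟪y, P w⟫ = 0 := by
      intro w
      rw [← hsa, hPy, inner_zero_left]
    have h1 := hPar y
    rw [← h1]
    apply Finset.sum_congr rfl
    intro i _
    simp only [inner_add_right, real_inner_smul_right, h0]
    ring
  -- dimensions
  have hdim : Module.finrank ℝ (EuclideanSpace ℝ (Fin n)) = n := by
    simp [finrank_euclideanSpace]
  have hkerdim : Module.finrank ℝ (LinearMap.ker P) = n - k := by
    have h1 := LinearMap.finrank_range_add_finrank_ker P
    rw [hdim, hrank] at h1
    omega
  -- apply the auxiliary lemma on each side
  have hp1 : ‖P u‖ ≤ 2 * ε := by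
    apply aux_small ε hε0 (LinearMap.range P) (by rw [hrank]; exact hk2) (P u)
      ⟨u, rfl⟩ (fun i => P (x i)) ?_ a hparP
    intro i
    have : P (x i) - P u = P (x i - u) := by rw [map_sub]
    rw [this]
    exact le_trans (hPle _) (hcl i)
  have hq1 : ‖u - P u‖ ≤ 2 * ε := by
    apply aux_small ε hε0 (LinearMap.ker P) (by rw [hkerdim]; omega) (u - P u)
      ?_ (fun i => x i - P (x i)) ?_ b hparQ
    · rw [LinearMap.mem_ker, map_sub, hPP', sub_self]
    · intro i
      have : (x i - P (x i)) - (u - P u) = (x i - u) - P (x i - u) := by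
        rw [map_sub]; abel
      rw [this]
      exact le_trans (hQle _) (hcl i)
  -- Pythagoras and the contradiction
  have horth : ⟪P u, u - P u⟫ = 0 := by
    rw [inner_sub_right]
    have h1 : ⟪P u, P u⟫ = ⟪P u, u⟫ := by
      calc ⟪P u, P u⟫ = ⟪u, P (P u)⟫ := hsa u (P u)
        _ = ⟪u, P u⟫ := by rw [hPP']
        _ = ⟪P u, u⟫ := real_inner_comm _ _
    rw [h1, sub_self]
  have hpyth : ‖u‖ ^ 2 = ‖P u‖ ^ 2 + ‖u - P u‖ ^ 2 := by
    have h1 : u = P u + (u - P u) := by abel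
    calc ‖u‖ ^ 2 = ‖P u + (u - P u)‖ ^ 2 := by rw [← h1]
      _ = ‖P u‖ ^ 2 + 2 * ⟪P u, u - P u⟫ + ‖u - P u‖ ^ 2 := norm_add_sq_real _ _
      _ = ‖P u‖ ^ 2 + ‖u - P u‖ ^ 2 := by rw [horth]; ring
  have hu1 : ‖u‖ = 1 := hnorm i0
  rw [hu1] at hpyth
  nlinarith [norm_nonneg (P u), norm_nonneg (u - P u), hε0]
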